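/- Let O be a discrete valuation ring with uniformizer λ and finite residue field, and let M₁, M₂ be finite O-modules. Then M₁[λ^n] ≅ M₂[λ^n] as O-modules if and only if |M₁[λ^r]| = |M₂[λ^r]| for all 1 ≤ r ≤ n. -/

import Mathlib

open Submodule

universe u v

section Equivs

variable {O : Type*} [CommRing O]

/-- Transport `torsionBy` across a linear equivalence. -/
noncomputable def torsionByCongr {A B : Type*} [AddCommGroup A] [Module O A]
    [AddCommGroup B] [Module O B] (g : A ≃ₗ[O] B) (c : O) :
    torsionBy O A c ≃ torsionBy O B c where
  toFun x := ⟨g x.1, by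
    rw [mem_torsionBy_iff, ← map_smul, (mem_torsionBy_iff _ _).mp x.2, map_zero]⟩
  invFun y := ⟨g.symm y.1, by
    rw [mem_torsionBy_iff, ← map_smul, (mem_torsionBy_iff _ _).mp y.2, map_zero]⟩
  left_inv x := by ext; simp
  right_inv y := by ext; simp

/-- `M[c] ≃ (M[d*c])[c]`. -/
def torsionByTorsionBy {M : Type*} [AddCommGroup M] [Module O M] (c d b : O)
    (hb : d * c = b) :
    torsionBy O M c ≃ torsionBy O (torsionBy O M b) c where
  toFun x := ⟨⟨x.1, by
      rw [mem_torsionBy_iff, ← hb, mul_smul, (mem_torsionBy_iff _ _).mp x.2, smul_zero]⟩, by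
    rw [mem_torsionBy_iff]
    ext
    exact (mem_torsionBy_iff _ _).mp x.2⟩
  invFun y := ⟨y.1.1, by
    rw [mem_torsionBy_iff]
    exact congrArg Subtype.val ((mem_torsionBy_iff _ _).mp y.2)⟩
  left_inv x := rfl
  right_inv y := rfl

/-- torsionBy of a Pi module. -/
def torsionByPi {ι : Type*} (Q : ι → Type*) [∀ i, AddCommGroup (Q i)]
    [∀ i, Module O (Q i)] (c : O) :
    torsionBy O (∀ i, Q i) c ≃ ∀ i, torsionBy O (Q i) c where
  toFun x i := ⟨x.1 i, by
    rw [mem_torsionBy_iff]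
    exact congrFun ((mem_torsionBy_iff _ _).mp x.2) i⟩
  invFun y := ⟨fun i => (y i).1, by
    rw [mem_torsionBy_iff]
    funext i
    exact (mem_torsionBy_iff _ _).mp (y i).2⟩
  left_inv x := rfl
  right_inv y := rfl

end Equivs

section Quot

variable {O : Type*} [CommRing O] [IsDomain O] {π : O}

/-- The `π^r`-torsion of `O ⧸ (π^e)` is isomorphic to `O ⧸ (π^(min e r))`. -/
noncomputable def torsionByQuotEquiv (hπ : Irreducible π) (e r : ℕ) :
    (O ⧸ Ideal.span {π ^ min e r}) ≃ₗ[O]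
      torsionBy O (O ⧸ Ideal.span {π ^ e}) (π ^ r) := by
  set m := min e r with hm
  set k := e - m with hk
  have hkm : k + m = e := by omega
  set φ₀ : O →ₗ[O] O ⧸ Ideal.span {π ^ e} :=
    (mkQ (Ideal.span {π ^ e})).comp (LinearMap.toSpanSingleton O O (π ^ k)) with hφ₀
  have hφ₀a : ∀ a : O, φ₀ a = Submodule.Quotient.mk (a * π ^ k) := fun a => rfl
  have hmem : ∀ a : O, φ₀ a ∈ torsionBy O (O ⧸ Ideal.span {π ^ e}) (π ^ r) := by
    intro a
    rw [mem_torsionBy_iff, hφ₀a, ← Submodule.Quotient.mk_smul, Submodule.Quotient.mk_eq_zero,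
      smul_eq_mul]
    rw [Ideal.mem_span_singleton]
    have h1 : π ^ e ∣ π ^ (r + k) := pow_dvd_pow π (by omega)
    exact h1.trans ⟨a, by ring⟩
  set φ := LinearMap.codRestrict _ φ₀ hmem with hφ
  have hφs : Function.Surjective φ := by
    rintro ⟨y, hy⟩
    obtain ⟨a, rfl⟩ := Submodule.Quotient.mk_surjective _ y
    rw [mem_torsionBy_iff, ← Submodule.Quotient.mk_smul, Submodule.Quotient.mk_eq_zero,
      smul_eq_mul, Ideal.mem_span_singleton] at hy
    have hka : π ^ k ∣ a := by
      rcases le_total r e with h | h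
      · have hmr : m = r := by omega
        have : π ^ r * π ^ k ∣ π ^ r * a := by
          rw [← pow_add]
          have : r + k = e := by omega
          rw [this]; exact hy
        exact (mul_dvd_mul_iff_left (pow_ne_zero r hπ.ne_zero)).mp this
      · have : k = 0 := by omega
        simp [this]
    obtain ⟨b, rfl⟩ := hka
    refine ⟨b, ?_⟩
    apply Subtype.ext
    rw [hφ]
    show φ₀ b = _
    rw [hφ₀a]
    exact congrArg _ (mul_comm b (π ^ k))
  have hker : LinearMap.ker φ = Ideal.span {π ^ m} := by
    rw [hφ, LinearMap.ker_codRestrict]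
    ext a
    rw [LinearMap.mem_ker, hφ₀a, Submodule.Quotient.mk_eq_zero, Ideal.mem_span_singleton,
      Ideal.mem_span_singleton]
    constructor
    · intro h
      have h' : π ^ k * π ^ m ∣ π ^ k * a := by
        rw [← pow_add, hkm]
        simpa [mul_comm] using h
      exact (mul_dvd_mul_iff_left (pow_ne_zero k hπ.ne_zero)).mp h'
    · intro h
      obtain ⟨b, rfl⟩ := h
      exact ⟨b, by rw [← hkm, pow_add]; ring⟩
  exact (quotEquivOfEq _ _ hker.symm).trans (φ.quotKerEquivOfSurjective hφs)

/-- `|O ⧸ (π^m)| = |O ⧸ (π)|^m`. -/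
lemma card_quot_pow (hπ : Irreducible π) (m : ℕ) :
    Nat.card (O ⧸ Ideal.span {π ^ m}) = Nat.card (O ⧸ Ideal.span {π}) ^ m := by
  induction m with
  | zero =>
    simp only [pow_zero, Ideal.span_singleton_one]
    haveI : Subsingleton (O ⧸ (⊤ : Ideal O)) :=
      Submodule.Quotient.subsingleton_iff.mpr rfl
    exact Nat.card_eq_one_iff_unique.mpr ⟨inferInstance, ⟨0⟩⟩
  | succ m ih =>
    set I1 := Ideal.span {π ^ (m + 1)} with hI1
    have hle : I1 ≤ Ideal.span {π} := by
      rw [hI1]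
      exact Ideal.span_singleton_le_span_singleton.mpr (dvd_pow_self π (Nat.succ_ne_zero m))
    set ψ : (O ⧸ I1) →ₗ[O] O ⧸ Ideal.span {π} :=
      Submodule.mapQ I1 (Ideal.span {π}) LinearMap.id hle with hψ
    have hψa : ∀ a : O, ψ (Submodule.Quotient.mk a) = Submodule.Quotient.mk a :=
      fun a => rfl
    have hψs : Function.Surjective ψ := by
      intro y
      obtain ⟨a, rfl⟩ := Submodule.Quotient.mk_surjective _ y
      exact ⟨Submodule.Quotient.mk a, hψa a⟩
    have hker : LinearMap.ker ψ = torsionBy O (O ⧸ I1) (π ^ m) := by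
      ext x
      obtain ⟨a, rfl⟩ := Submodule.Quotient.mk_surjective _ x
      rw [LinearMap.mem_ker, hψa, Submodule.Quotient.mk_eq_zero, Ideal.mem_span_singleton,
        mem_torsionBy_iff, ← Submodule.Quotient.mk_smul, Submodule.Quotient.mk_eq_zero,
        smul_eq_mul, hI1, Ideal.mem_span_singleton]
      constructor
      · rintro ⟨b, rfl⟩
        exact ⟨b, by ring⟩
      · intro h
        have h' : π ^ m * π ∣ π ^ m * a := by
          rw [← pow_succ]; exact h
        exact (mul_dvd_mul_iff_left (pow_ne_zero m hπ.ne_zero)).mp h'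
    have e1 : ((O ⧸ I1) ⧸ LinearMap.ker ψ) ≃ₗ[O] O ⧸ Ideal.span {π} :=
      ψ.quotKerEquivOfSurjective hψs
    have hmin : min (m+1) m = m := min_eq_right (Nat.le_succ m)
    have e2 : (O ⧸ Ideal.span {π ^ m}) ≃ₗ[O] torsionBy O (O ⧸ I1) (π ^ m) :=
      (quotEquivOfEq _ _ (by rw [hmin])).trans (torsionByQuotEquiv hπ (m+1) m)
    have h1 : Nat.card ((O ⧸ I1) ⧸ LinearMap.ker ψ) = Nat.card (O ⧸ Ideal.span {π}) :=
      Nat.card_congr e1.toEquiv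
    have h2 : Nat.card (LinearMap.ker ψ) = Nat.card (O ⧸ Ideal.span {π ^ m}) := by
      rw [hker]
      exact Nat.card_congr e2.toEquiv.symm
    rw [Submodule.card_eq_card_quotient_mul_card (LinearMap.ker ψ), h1, h2, ih, pow_succ,
      mul_comm]

lemma two_le_card_quot (hπ : Irreducible π) [Finite (O ⧸ Ideal.span {π})] :
    2 ≤ Nat.card (O ⧸ Ideal.span {π}) := by
  have hne : Ideal.span {π} ≠ ⊤ := by
    rw [Ne, Ideal.span_singleton_eq_top]
    exact hπ.not_isUnit
  haveI : Nontrivial (O ⧸ Ideal.span {π}) :=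
    Submodule.Quotient.nontrivial_iff.mpr hne
  exact Finite.one_lt_card_iff_nontrivial.mpr inferInstance

end Quot

section Counting

open Finset

private lemma aux_sum_min {ι : Type*} [Fintype ι] (g : ι → ℕ) (r : ℕ) :
    ∑ i, min (g i) (r + 1) = (∑ i, min (g i) r) + (univ.filter (fun i => r + 1 ≤ g i)).card := by
  classical
  have h : ∀ i : ι, min (g i) (r + 1) = min (g i) r + if r + 1 ≤ g i then 1 else 0 := by
    intro i; split_ifs with h <;> omega
  rw [Finset.sum_congr rfl (fun i _ => h i), Finset.sum_add_distrib, Finset.card_filter]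

private lemma aux_count_split {ι : Type*} [Fintype ι] (g : ι → ℕ) (m : ℕ) :
    (univ.filter (fun i => m ≤ g i)).card
      = (univ.filter (fun i => m + 1 ≤ g i)).card + (univ.filter (fun i => g i = m)).card := by
  classical
  rw [Finset.card_filter, Finset.card_filter, Finset.card_filter, ← Finset.sum_add_distrib]
  refine Finset.sum_congr rfl fun i _ => ?_
  split_ifs <;> omega

private lemma fiber_card_eq {ι κ : Type*} [Fintype ι] [Fintype κ] (e : ι → ℕ) (f : κ → ℕ)
    (n : ℕ) (he : ∀ i, e i ≤ n) (hf : ∀ j, f j ≤ n)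
    (hS : ∀ r, 1 ≤ r → r ≤ n → ∑ i, min (e i) r = ∑ j, min (f j) r) :
    ∀ m, 1 ≤ m → Nat.card {i // e i = m} = Nat.card {j // f j = m} := by
  classical
  have hS0 : ∀ r, r ≤ n → ∑ i, min (e i) r = ∑ j, min (f j) r := by
    intro r hr
    rcases Nat.eq_zero_or_pos r with rfl | hr1
    · simp
    · exact hS r hr1 hr
  have hA : ∀ r, 1 ≤ r → r ≤ n + 1 →
      (univ.filter (fun i => r ≤ e i)).card = (univ.filter (fun j => r ≤ f j)).card := by
    intro r hr1 hrn
    rcases Nat.lt_or_ge r (n + 1) with hlt | hge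
    · obtain ⟨s, rfl⟩ := Nat.exists_eq_add_of_le hr1
      have h1 := aux_sum_min e s
      have h2 := aux_sum_min f s
      have h3 := hS0 s (by omega)
      have h4 := hS0 (s + 1) (by omega)
      rw [add_comm 1 s] at *
      omega
    · have hr : r = n + 1 := by omega
      subst hr
      rw [Finset.filter_false_of_mem (fun i _ => by have := he i; omega),
        Finset.filter_false_of_mem (fun j _ => by have := hf j; omega)]
      rfl
  intro m hm
  have hconv1 : Nat.card {i // e i = m} = (univ.filter (fun i => e i = m)).card := by
    rw [Nat.card_eq_fintype_card, Fintype.card_subtype]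
  have hconv2 : Nat.card {j // f j = m} = (univ.filter (fun j => f j = m)).card := by
    rw [Nat.card_eq_fintype_card, Fintype.card_subtype]
  rw [hconv1, hconv2]
  rcases Nat.lt_or_ge n m with hlt | hge
  · rw [Finset.filter_false_of_mem (fun i _ => by have := he i; omega),
      Finset.filter_false_of_mem (fun j _ => by have := hf j; omega)]
    rfl
  · have h1 := aux_count_split e m
    have h2 := aux_count_split f m
    have h3 := hA m hm (by omega)
    have h4 := hA (m + 1) (by omega) (by omega)
    omega

end Counting

section PiEquiv

variable {O : Type*} [CommRing O] {π : O}

/-- Reindex a Pi of quotients along fibers of the exponent function. -/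
noncomputable def piToFibers {ι : Type*} (e : ι → ℕ) :
    (∀ i, O ⧸ Ideal.span {π ^ e i}) ≃ₗ[O]
      ∀ m : ℕ, {i // e i = m} → O ⧸ Ideal.span {π ^ m} :=
  ((LinearEquiv.piCongrLeft' O (fun i => O ⧸ Ideal.span {π ^ e i})
      (Equiv.sigmaFiberEquiv e).symm).trans
    (LinearEquiv.piCongrRight (fun s : Σ m : ℕ, {i // e i = m} =>
      quotEquivOfEq _ _ (by rcases s with ⟨m, i, rfl⟩; rfl)))).trans
    (LinearEquiv.piCurry O (fun (m : ℕ) (_ : {i // e i = m}) => O ⧸ Ideal.span {π ^ m}))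

noncomputable def piQuotEquivOfCounts {ι κ : Type*} (e : ι → ℕ) (f : κ → ℕ)
    (h : ∀ m, 1 ≤ m → Nonempty ({i // e i = m} ≃ {j // f j = m})) :
    (∀ i, O ⧸ Ideal.span {π ^ e i}) ≃ₗ[O] (∀ j, O ⧸ Ideal.span {π ^ f j}) := by
  refine ((piToFibers e).trans
    (LinearEquiv.piCongrRight fun m => ?_)).trans (piToFibers f).symm
  cases m with
  | zero =>
    haveI : Subsingleton (O ⧸ Ideal.span {π ^ (0:ℕ)}) := by
      rw [Submodule.Quotient.subsingleton_iff]
      simp [Ideal.span_singleton_one]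
    exact LinearEquiv.ofSubsingleton _ _
  | succ m =>
    exact LinearEquiv.piCongrLeft' O (fun _ => O ⧸ Ideal.span {π ^ (m+1)})
      (h (m+1) (Nat.succ_le_succ (Nat.zero_le m))).some

end PiEquiv

lemma exists_pi_equiv {O : Type u} [CommRing O] [IsDomain O] [IsDiscreteValuationRing O]
    {π : O} (hπ : Irreducible π)
    (M : Type v) [AddCommGroup M] [Module O M] [Finite M] (n : ℕ) :
    ∃ (ι : Type u) (_ : Fintype ι) (e : ι → ℕ), (∀ i, e i ≤ n) ∧
      Nonempty ((torsionBy O M (π ^ n)) ≃ₗ[O] ∀ i, O ⧸ Ideal.span {π ^ e i}) := by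
  classical
  set N := torsionBy O M (π ^ n) with hN
  have hT : Module.IsTorsion O (ULift.{u} N) := by
    intro x
    refine ⟨⟨π ^ n, mem_nonZeroDivisors_of_ne_zero (pow_ne_zero n hπ.ne_zero)⟩, ?_⟩
    refine ULift.ext _ _ ?_
    show (π ^ n) • x.down = 0
    exact smul_torsionBy _ _
  obtain ⟨ι, fι, p, hp, ee, ⟨l⟩⟩ := Module.equiv_directSum_of_isTorsion hT
  haveI := fι
  have g2 := DirectSum.linearEquivFunOnFintype O ι (fun i => O ⧸ (O ∙ p i ^ ee i))
  have g3 : (∀ i, O ⧸ (O ∙ p i ^ ee i)) ≃ₗ[O] ∀ i, O ⧸ Ideal.span {π ^ ee i} :=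
    LinearEquiv.piCongrRight fun i =>
      quotEquivOfEq _ _ (Ideal.span_singleton_eq_span_singleton.mpr
        ((IsDiscreteValuationRing.associated_of_irreducible O (hp i) hπ).pow_pow))
  have g : N ≃ₗ[O] ∀ i, O ⧸ Ideal.span {π ^ ee i} :=
    (ULift.moduleEquiv.symm.trans l).trans (g2.trans g3)
  have he : ∀ i, ee i ≤ n := by
    intro i
    have hx : (π ^ n) • (fun _ => Submodule.Quotient.mk 1 :
        ∀ i, O ⧸ Ideal.span {π ^ ee i}) = 0 := by
      conv_lhs => rw [← g.apply_symm_apply (fun _ => Submodule.Quotient.mk 1), ← map_smul,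
        smul_torsionBy, map_zero]
    have h2 := congrFun hx i
    rw [Pi.smul_apply, ← Submodule.Quotient.mk_smul, smul_eq_mul, mul_one, Pi.zero_apply,
      Submodule.Quotient.mk_eq_zero, Ideal.mem_span_singleton] at h2
    exact (pow_dvd_pow_iff hπ.ne_zero hπ.not_isUnit).mp h2
  exact ⟨ι, fι, ee, he, ⟨g⟩⟩

private lemma card_torsion_eq_pow {O : Type*} [CommRing O] [IsDomain O] {π : O}
    (hπ : Irreducible π) {n : ℕ} {μ : Type*} [Fintype μ] (ee : μ → ℕ)
    {M : Type*} [AddCommGroup M] [Module O M]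
    (g : (torsionBy O M (π ^ n)) ≃ₗ[O] ∀ i, O ⧸ Ideal.span {π ^ ee i})
    (r : ℕ) (hrn : r ≤ n) :
    Nat.card (torsionBy O M (π ^ r))
      = Nat.card (O ⧸ Ideal.span {π}) ^ (∑ i, min (ee i) r) := by
  have hmul : π ^ (n - r) * π ^ r = π ^ n := by rw [← pow_add, Nat.sub_add_cancel hrn]
  calc Nat.card (torsionBy O M (π ^ r))
      = Nat.card (torsionBy O (∀ i, O ⧸ Ideal.span {π ^ ee i}) (π ^ r)) :=
        Nat.card_congr ((torsionByTorsionBy _ _ _ hmul).trans (torsionByCongr g _))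
    _ = Nat.card (∀ i, torsionBy O (O ⧸ Ideal.span {π ^ ee i}) (π ^ r)) :=
        Nat.card_congr (torsionByPi _ _)
    _ = ∏ i, Nat.card (torsionBy O (O ⧸ Ideal.span {π ^ ee i}) (π ^ r)) := Nat.card_pi
    _ = ∏ i, Nat.card (O ⧸ Ideal.span {π ^ (min (ee i) r)}) :=
        Finset.prod_congr rfl fun i _ =>
          (Nat.card_congr (torsionByQuotEquiv hπ (ee i) r).toEquiv).symm
    _ = ∏ i, Nat.card (O ⧸ Ideal.span {π}) ^ (min (ee i) r) :=
        Finset.prod_congr rfl fun i _ => card_quot_pow hπ _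
    _ = Nat.card (O ⧸ Ideal.span {π}) ^ (∑ i, min (ee i) r) :=
        Finset.prod_pow_eq_pow_sum _ _ _

/-- For finite modules `M₁, M₂` over a DVR `O` with uniformizer `π` and
finite residue field, `M₁[π^n] ≅ M₂[π^n]` as `O`-modules iff
`|M₁[π^r]| = |M₂[π^r]|` for all `1 ≤ r ≤ n`. -/
theorem stmt1 (O : Type*) [CommRing O] [IsDomain O] [IsDiscreteValuationRing O]
    (π : O) (hπ : Irreducible π) [Finite (O ⧸ Ideal.span {π})]
    (M₁ M₂ : Type*) [AddCommGroup M₁] [Module O M₁] [Finite M₁]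
    [AddCommGroup M₂] [Module O M₂] [Finite M₂] (n : ℕ) :
    Nonempty ((Submodule.torsionBy O M₁ (π ^ n)) ≃ₗ[O] (Submodule.torsionBy O M₂ (π ^ n)))
      ↔ ∀ r, 1 ≤ r → r ≤ n →
          Nat.card (Submodule.torsionBy O M₁ (π ^ r)) =
            Nat.card (Submodule.torsionBy O M₂ (π ^ r)) := by
  classical
  constructor
  · rintro ⟨g⟩ r hr1 hrn
    have hmul : π ^ (n - r) * π ^ r = π ^ n := by rw [← pow_add, Nat.sub_add_cancel hrn]
    exact Nat.card_congr
      (((torsionByTorsionBy (π ^ r) (π ^ (n-r)) (π ^ n) hmul).trans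
        (torsionByCongr g (π ^ r))).trans
        (torsionByTorsionBy (π ^ r) (π ^ (n-r)) (π ^ n) hmul).symm)
  · intro h
    obtain ⟨ι, fι, e, he, ⟨g₁⟩⟩ := exists_pi_equiv hπ M₁ n
    obtain ⟨κ, fκ, f, hf, ⟨g₂⟩⟩ := exists_pi_equiv hπ M₂ n
    haveI := fι; haveI := fκ
    set q := Nat.card (O ⧸ Ideal.span {π}) with hq
    have hq2 : 2 ≤ q := two_le_card_quot hπ
    have hS : ∀ r, 1 ≤ r → r ≤ n → ∑ i, min (e i) r = ∑ j, min (f j) r := by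
      intro r h1 h2
      have hc := h r h1 h2
      have k1 := card_torsion_eq_pow hπ e g₁ r h2
      have k2 := card_torsion_eq_pow hπ f g₂ r h2
      rw [k1, k2] at hc
      exact Nat.pow_right_injective hq2 hc
    have hfib := fiber_card_eq e f n he hf hS
    have hfib' : ∀ m, 1 ≤ m → Nonempty ({i // e i = m} ≃ {j // f j = m}) :=
      fun m hm => Finite.card_eq.mp (hfib m hm)
    exact ⟨g₁.trans ((piQuotEquivOfCounts e f hfib').trans g₂.symm)⟩
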